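/- arXiv:1811.05131 — 4 statements merged into one kernel-verified Lean document; each statement's English description precedes it below -/
import Mathlib

section
/- Let f₀,F : ℝⁿ×ℝ^d → ℝ be C² functions and let (x̄,w̄) satisfy F(x̄,w̄) = 0, ∇ₓF(x̄,w̄) ≠ 0, and suppose there is λ > 0 with ∇ₓf₀(x̄,w̄)+λ∇ₓF(x̄,w̄) = 0. If the only pair (v,γ) ∈ ℝⁿ×ℝ satisfying (∇²ₓₓf₀(x̄,w̄)+λ∇²ₓₓF(x̄,w̄))v + γ∇ₓF(x̄,w̄) = 0 and ⟨∇ₓF(x̄,w̄), v⟩ = 0 is (0,0), then the stationary point set map S has a Lipschitz continuous single-valued localization around w̄ for x̄. -/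
noncomputable section

/-- The Euclidean space `ℝⁿ`. -/
abbrev En (n : ℕ) := EuclideanSpace ℝ (Fin n)

/-- The partial gradient in `x` of a function `f : ℝⁿ × ℝ^d → ℝ`. -/
def gradx {n d : ℕ} (f : En n × En d → ℝ) (x : En n) (w : En d) : En n :=
  gradient (fun y => f (y, w)) x

/-- The stationary (KKT) point set `S(w)` of the problem
`minimize f₀(x,w) subject to F(x,w) ≤ 0`. -/
def Sgen {n d : ℕ} (f₀ F : En n × En d → ℝ) (w : En d) : Set (En n) :=
  {x | F (x, w) ≤ 0 ∧ ∃ μ : ℝ, 0 ≤ μ ∧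
    gradx f₀ x w + μ • gradx F x w = 0 ∧ μ * F (x, w) = 0}

/-- `S` has a Lipschitz continuous single-valued localization around `w0` for `x0`:
there are neighborhoods `V` of `w0`, `U` of `x0` and a Lipschitz continuous map
`s` on `V` with `s(w0) = x0` and `S(w) ∩ U = {s(w)}` for every `w ∈ V`. -/
def HasLipschitzLocalization {n d : ℕ} (S : En d → Set (En n))
    (w0 : En d) (x0 : En n) : Prop :=
  ∃ V ∈ nhds w0, ∃ U ∈ nhds x0, ∃ s : En d → En n, ∃ K : NNReal,
    LipschitzOnWith K s V ∧ s w0 = x0 ∧ ∀ w ∈ V, S w ∩ U = {s w}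

open ContinuousLinearMap InnerProductSpace Set Filter

lemma fderiv_slice {n d : ℕ} {f : En n × En d → ℝ} (hf : ContDiff ℝ 2 f)
    (x : En n) (w : En d) :
    fderiv ℝ (fun y => f (y, w)) x = (fderiv ℝ f (x, w)).comp (inl ℝ (En n) (En d)) := by
  have h1 : HasFDerivAt f (fderiv ℝ f (x, w)) (x, w) :=
    (hf.differentiable (by norm_num)).differentiableAt.hasFDerivAt
  exact (h1.comp x (hasFDerivAt_prodMk_left x w)).fderiv

lemma gradx_eq {n d : ℕ} {f : En n × En d → ℝ} (hf : ContDiff ℝ 2 f) :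
    (fun p : En n × En d => gradx f p.1 p.2) =
      fun p => (toDual ℝ (En n)).symm ((fderiv ℝ f p).comp (inl ℝ (En n) (En d))) := by
  funext p
  rw [gradx, gradient, fderiv_slice hf p.1 p.2]

lemma gradx_contDiff {n d : ℕ} {f : En n × En d → ℝ} (hf : ContDiff ℝ 2 f) :
    ContDiff ℝ 1 (fun p : En n × En d => gradx f p.1 p.2) := by
  rw [gradx_eq hf]
  have h1 : ContDiff ℝ 1 (fderiv ℝ f) := hf.fderiv_right (by norm_num)
  have h2 := ((compL ℝ (En n) (En n × En d) ℝ).flip (inl ℝ (En n) (En d))).contDiff.comp h1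
  exact (toDual ℝ (En n)).symm.contDiff.comp h2

lemma gradx_inner_eq {n d : ℕ} {f : En n × En d → ℝ} (hf : ContDiff ℝ 2 f)
    (x : En n) (w : En d) (v : En n) :
    (inner ℝ (gradx f x w) v : ℝ) = fderiv ℝ f (x, w) (v, 0) := by
  rw [gradx, gradient, fderiv_slice hf x w, toDual_symm_apply]
  rfl

set_option maxHeartbeats 2000000 in
open RealInnerProductSpace in
/-- If `F(x0,w0) = 0`, `∇ₓF(x0,w0) ≠ 0`, the Lagrange multiplier
`λ > 0`, and the only `(v,γ)` with `(∇²ₓₓf₀ + λ∇²ₓₓF)v + γ∇ₓF = 0` and `⟨∇ₓF, v⟩ = 0`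
is `(0,0)`, then `S` has a Lipschitz continuous single-valued localization
around `w0` for `x0`. -/
theorem stmt10 {n d : ℕ} (f₀ F : En n × En d → ℝ)
    (hf₀ : ContDiff ℝ 2 f₀) (hF : ContDiff ℝ 2 F)
    (x0 : En n) (w0 : En d) (lam : ℝ)
    (hFeq : F (x0, w0) = 0)
    (hgF : gradx F x0 w0 ≠ 0)
    (hlam : 0 < lam)
    (hKKT : gradx f₀ x0 w0 + lam • gradx F x0 w0 = 0)
    (hreg : ∀ (v : En n) (γ : ℝ),
      (fderiv ℝ (fun y => gradx f₀ y w0) x0) v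
        + lam • (fderiv ℝ (fun y => gradx F y w0) x0) v
        + γ • gradx F x0 w0 = 0 →
      ⟪gradx F x0 w0, v⟫ = 0 → v = 0 ∧ γ = 0) :
    HasLipschitzLocalization (Sgen f₀ F) w0 x0 := by
  classical
  set Gf : (En n) × (En d) → (En n) := fun p => gradx f₀ p.1 p.2 with hGf_def
  set Gg : (En n) × (En d) → (En n) := fun p => gradx F p.1 p.2 with hGg_def
  have hGfC : ContDiff ℝ 1 Gf := gradx_contDiff hf₀
  have hGgC : ContDiff ℝ 1 Gg := gradx_contDiff hF
  set p0 : (En n) × (En d) := (x0, w0) with hp0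
  set z0 : ((En n × ℝ) × En d) := ((x0, lam), w0) with hz0
  set y0 : ((En n × ℝ) × En d) := (((0 : (En n)), (0 : ℝ)), w0) with hy0
  set g1 : (En n) := gradx F x0 w0 with hg1
  set π : ((En n × ℝ) × En d) →L[ℝ] (En n) × (En d) :=
    ((fst ℝ (En n) ℝ).comp (fst ℝ ((En n) × ℝ) (En d))).prod (snd ℝ ((En n) × ℝ) (En d)) with hπ
  set ρ : ((En n × ℝ) × En d) →L[ℝ] ℝ := (snd ℝ (En n) ℝ).comp (fst ℝ ((En n) × ℝ) (En d)) with hρ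
  set σ' : ((En n × ℝ) × En d) →L[ℝ] (En d) := snd ℝ ((En n) × ℝ) (En d) with hσ
  set Ψ : ((En n × ℝ) × En d) → ((En n × ℝ) × En d) := fun z => ((Gf (π z) + z.1.2 • Gg (π z), F (π z)), z.2) with hΨdef
  set A : ((En n) × (En d)) →L[ℝ] (En n) := fderiv ℝ Gf p0 with hA
  set B : ((En n) × (En d)) →L[ℝ] (En n) := fderiv ℝ Gg p0 with hB
  set DF : ((En n) × (En d)) →L[ℝ] ℝ := fderiv ℝ F p0 with hDF
  have hGfA : HasStrictFDerivAt Gf A p0 := hGfC.contDiffAt.hasStrictFDerivAt one_ne_zero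
  have hGgB : HasStrictFDerivAt Gg B p0 := hGgC.contDiffAt.hasStrictFDerivAt one_ne_zero
  have hFDF : HasStrictFDerivAt F DF p0 :=
    hF.contDiffAt.hasStrictFDerivAt (by norm_num)
  have h1 : HasStrictFDerivAt (fun z => Gf (π z)) (A.comp π) z0 :=
    hGfA.comp z0 π.hasStrictFDerivAt
  have h2 : HasStrictFDerivAt (fun z : ((En n × ℝ) × En d) => ρ z • Gg (π z))
      (lam • (B.comp π) + ρ.smulRight g1) z0 :=
    ρ.hasStrictFDerivAt.smul (hGgB.comp z0 π.hasStrictFDerivAt)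
  have h3 : HasStrictFDerivAt (fun z => F (π z)) (DF.comp π) z0 :=
    hFDF.comp z0 π.hasStrictFDerivAt
  set L : ((En n × ℝ) × En d) →L[ℝ] ((En n × ℝ) × En d) :=
    (((A.comp π) + (lam • (B.comp π) + ρ.smulRight g1)).prod (DF.comp π)).prod σ' with hL
  have hΨL : HasStrictFDerivAt Ψ L z0 := ((h1.add h2).prodMk h3).prodMk σ'.hasStrictFDerivAt
  have hAeq : fderiv ℝ (fun y => gradx f₀ y w0) x0 = A.comp (inl ℝ (En n) (En d)) :=
    by have h := (hGfA.hasFDerivAt.comp x0 (hasFDerivAt_prodMk_left (𝕜 := ℝ) x0 w0)).fderiv; exact h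
  have hBeq : fderiv ℝ (fun y => gradx F y w0) x0 = B.comp (inl ℝ (En n) (En d)) :=
    by have h := (hGgB.hasFDerivAt.comp x0 (hasFDerivAt_prodMk_left (𝕜 := ℝ) x0 w0)).fderiv; exact h
  have hker : ∀ z : ((En n × ℝ) × En d), L z = 0 → z = 0 := by
    rintro ⟨⟨v, γ⟩, u⟩ hz
    rw [Prod.ext_iff, Prod.ext_iff] at hz
    obtain ⟨⟨e1, e2⟩, e3⟩ := hz
    have hu : u = 0 := e3
    subst hu
    have e1' : A (v, 0) + (lam • B (v, 0) + γ • g1) = 0 := by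
      simpa [L, π, ρ, σ'] using e1
    have e2' : DF (v, 0) = 0 := by simpa [L, π, ρ, σ'] using e2
    have hin : ⟪gradx F x0 w0, v⟫ = 0 := by
      rw [gradx_inner_eq hF x0 w0 v]; exact e2'
    have hre : (fderiv ℝ (fun y => gradx f₀ y w0) x0) v
        + lam • (fderiv ℝ (fun y => gradx F y w0) x0) v
        + γ • gradx F x0 w0 = 0 := by
      rw [hAeq, hBeq]
      simpa [add_assoc] using e1'
    obtain ⟨hv, hγ⟩ := hreg v γ hre hin
    simp [hv, hγ, Prod.ext_iff]
  have hinj : Function.Injective L :=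
    (injective_iff_map_eq_zero L).mpr hker
  have hsurj : Function.Surjective (L.toLinearMap) :=
    LinearMap.injective_iff_surjective.mp hinj
  set eL : ((En n × ℝ) × En d) ≃L[ℝ] ((En n × ℝ) × En d) :=
    LinearEquiv.toContinuousLinearEquiv (LinearEquiv.ofBijective L.toLinearMap ⟨hinj, hsurj⟩)
    with heL
  have heLL : (eL : ((En n × ℝ) × En d) →L[ℝ] ((En n × ℝ) × En d)) = L :=
    ContinuousLinearMap.ext fun z => rfl
  have hΨe : HasStrictFDerivAt Ψ (eL : ((En n × ℝ) × En d) →L[ℝ] ((En n × ℝ) × En d)) z0 := heLL ▸ hΨL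
  have hΨz0 : Ψ z0 = y0 := by
    show ((gradx f₀ x0 w0 + lam • gradx F x0 w0, F (x0, w0)), w0) = y0
    rw [hKKT, hFeq]
  set φ := hΨe.toOpenPartialHomeomorph Ψ with hφ
  have hφcoe : (φ : ((En n × ℝ) × En d) → ((En n × ℝ) × En d)) = Ψ := rfl
  have hz0src : z0 ∈ φ.source := hΨe.mem_toOpenPartialHomeomorph_source
  have hy0tgt : y0 ∈ φ.target := by
    rw [← hΨz0]; exact hΨe.image_mem_toOpenPartialHomeomorph_target
  set inv : ((En n × ℝ) × En d) → ((En n × ℝ) × En d) := ⇑φ.symm with hinvdef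
  have hinvz0 : inv y0 = z0 := by
    rw [← hΨz0]
    exact hΨe.localInverse_apply_image
  have hinvstrict : HasStrictFDerivAt inv ((eL.symm : ((En n × ℝ) × En d) →L[ℝ] ((En n × ℝ) × En d))) y0 := by
    rw [← hΨz0]
    exact hΨe.to_localInverse
  have hinvcont : ContinuousAt inv y0 := hinvstrict.continuousAt
  obtain ⟨K, t, htmem, hlipinv⟩ := hinvstrict.exists_lipschitzOnWith
  set μh : (En n) × (En d) → ℝ := fun p => -(inner ℝ (Gg p) (Gf p) : ℝ) / (inner ℝ (Gg p) (Gg p) : ℝ)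
    with hμh
  have hGfp0 : Gf p0 = -(lam • g1) := by
    show gradx f₀ x0 w0 = -(lam • g1)
    rw [eq_neg_iff_add_eq_zero]
    exact hKKT
  have hGgp0 : Gg p0 = g1 := rfl
  have hg1ne : (inner ℝ g1 g1 : ℝ) ≠ 0 := inner_self_ne_zero.mpr hgF
  have hμh0 : μh p0 = lam := by
    show -(inner ℝ (Gg p0) (Gf p0) : ℝ) / (inner ℝ (Gg p0) (Gg p0) : ℝ) = lam
    rw [hGfp0, hGgp0, inner_neg_right, neg_neg, real_inner_smul_right,
      mul_div_assoc, div_self hg1ne, mul_one]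
  have hμhcont : ContinuousAt μh p0 := by
    have hc1 : Continuous Gf := hGfC.continuous
    have hc2 : Continuous Gg := hGgC.continuous
    exact ContinuousAt.div
      (((hc2.continuousAt).inner (hc1.continuousAt)).neg)
      ((hc2.continuousAt).inner (hc2.continuousAt)) hg1ne
  set Θ : (En n) × (En d) → ((En n × ℝ) × En d) := fun p => ((p.1, μh p), p.2) with hΘ
  have hΘcont : ContinuousAt Θ p0 :=
    (continuousAt_fst.prodMk hμhcont).prodMk continuousAt_snd
  have hΘp0 : Θ p0 = z0 := by
    show ((x0, μh p0), w0) = z0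
    rw [hμh0]
  have hN1 : Θ ⁻¹' φ.source ∈ nhds p0 :=
    hΘcont.preimage_mem_nhds (hΘp0 ▸ φ.open_source.mem_nhds hz0src)
  have hGfp0ne : Gf p0 ≠ 0 := by
    rw [hGfp0]
    simp only [neg_ne_zero]
    exact smul_ne_zero hlam.ne' hgF
  have hN2 : {p : (En n) × (En d) | Gf p ≠ 0} ∈ nhds p0 :=
    hGfC.continuous.continuousAt.preimage_mem_nhds (compl_singleton_mem_nhds hGfp0ne)
  have hN3 : {p : (En n) × (En d) | Gg p ≠ 0} ∈ nhds p0 :=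
    hGgC.continuous.continuousAt.preimage_mem_nhds (compl_singleton_mem_nhds hgF)
  have hN : (Θ ⁻¹' φ.source ∩ ({p : (En n) × (En d) | Gf p ≠ 0} ∩ {p | Gg p ≠ 0})) ∈ nhds p0 :=
    Filter.inter_mem hN1 (Filter.inter_mem hN2 hN3)
  obtain ⟨U, hU, V₁, hV₁, hUV⟩ := mem_nhds_prod_iff.mp hN
  set ι : (En d) → ((En n × ℝ) × En d) := fun w => (((0 : (En n)), (0 : ℝ)), w) with hι
  have hιlip : LipschitzWith 1 ι := LipschitzWith.prodMk_left ((0 : (En n)), (0 : ℝ))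
  have hιcont : Continuous ι := hιlip.continuous
  have hιw0 : ι w0 = y0 := rfl
  have hc2 : ContinuousAt (fun y => (inv y).1.2) y0 :=
    hinvcont.fst.snd
  have hS2 : {y : ((En n × ℝ) × En d) | 0 < (inv y).1.2} ∈ nhds y0 := by
    have h := hc2.preimage_mem_nhds (Ioi_mem_nhds (show (0:ℝ) < (inv y0).1.2 by
      rw [hinvz0]; exact hlam))
    exact h
  have hc3 : ContinuousAt (fun y => (inv y).1.1) y0 :=
    hinvcont.fst.fst
  have hS3 : {y : ((En n × ℝ) × En d) | (inv y).1.1 ∈ U} ∈ nhds y0 :=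
    hc3.preimage_mem_nhds (by rw [hinvz0]; exact hU)
  set T : Set ((En n × ℝ) × En d) := φ.target ∩ t ∩ {y | 0 < (inv y).1.2} ∩ {y | (inv y).1.1 ∈ U} with hT
  have hTm : T ∈ nhds y0 :=
    inter_mem (inter_mem (inter_mem (φ.open_target.mem_nhds hy0tgt) htmem) hS2) hS3
  set V : Set (En d) := V₁ ∩ ι ⁻¹' T with hV
  have hVm : V ∈ nhds w0 :=
    inter_mem hV₁ (hιcont.continuousAt.preimage_mem_nhds (hιw0 ▸ hTm))
  set s : (En d) → (En n) := fun w => (inv (ι w)).1.1 with hs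
  have hmap : MapsTo ι V t := fun w hw => hw.2.1.1.2
  have hιlipOn : LipschitzOnWith 1 ι V := hιlip.lipschitzOnWith
  have hlips0 : LipschitzOnWith (K * 1) (inv ∘ ι) V :=
    hlipinv.comp hιlipOn hmap
  have hlips : LipschitzOnWith (1 * (1 * (K * 1))) s V :=
    LipschitzWith.comp_lipschitzOnWith LipschitzWith.prod_fst
      (LipschitzWith.comp_lipschitzOnWith LipschitzWith.prod_fst hlips0)
  have hsw0 : s w0 = x0 := by
    show (inv (ι w0)).1.1 = x0
    rw [hιw0, hinvz0]
  refine ⟨V, hVm, U, hU, s, 1 * (1 * (K * 1)), hlips, hsw0, ?_⟩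
  intro w hw
  obtain ⟨hwV₁, hwT⟩ := hw
  have htgt : ι w ∈ φ.target := hwT.1.1.1
  have hpos : (0:ℝ) < (inv (ι w)).1.2 := hwT.1.2
  have hsU : (inv (ι w)).1.1 ∈ U := hwT.2
  set q : ((En n × ℝ) × En d) := inv (ι w) with hq
  have hqsrc : q ∈ φ.source := φ.map_target htgt
  have hΨq : Ψ q = ι w := φ.right_inv htgt
  have hq1 : Gf (q.1.1, q.2) + q.1.2 • Gg (q.1.1, q.2) = 0 :=
    congrArg (fun z : ((En n × ℝ) × En d) => z.1.1) hΨq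
  have hq2 : F (q.1.1, q.2) = 0 := congrArg (fun z : ((En n × ℝ) × En d) => z.1.2) hΨq
  have hq3 : q.2 = w := congrArg (fun z : ((En n × ℝ) × En d) => z.2) hΨq
  ext x
  simp only [Set.mem_inter_iff, Set.mem_singleton_iff]
  constructor
  · rintro ⟨hmem, hxU⟩
    obtain ⟨hFle, μ, hμ0, hstat, hcomp⟩ := hmem
    have hp := hUV (Set.mk_mem_prod hxU hwV₁)
    have hΘsrc : Θ (x, w) ∈ φ.source := hp.1
    have hGfne : Gf (x, w) ≠ 0 := hp.2.1
    have hGgne : Gg (x, w) ≠ 0 := hp.2.2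
    have hμne : μ ≠ 0 := by
      rintro rfl
      apply hGfne
      simpa using hstat
    have hFpx : F (x, w) = 0 := by
      rcases mul_eq_zero.mp hcomp with h | h
      · exact absurd h hμne
      · exact h
    have hne : (inner ℝ (Gg (x, w)) (Gg (x, w)) : ℝ) ≠ 0 := inner_self_ne_zero.mpr hGgne
    have hiq : (inner ℝ (Gg (x, w)) (Gf (x, w)) : ℝ)
        + μ * (inner ℝ (Gg (x, w)) (Gg (x, w)) : ℝ) = 0 := by
      have hstat' : Gf (x, w) + μ • Gg (x, w) = 0 := hstat
      have hcongr := congrArg (fun y : (En n) => (inner ℝ (Gg (x, w)) y : ℝ)) hstat'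
      simp only [inner_add_right, real_inner_smul_right, inner_zero_right] at hcongr
      exact hcongr
    have hμval : μ = μh (x, w) := by
      show μ = -(inner ℝ (Gg (x, w)) (Gf (x, w)) : ℝ) / (inner ℝ (Gg (x, w)) (Gg (x, w)) : ℝ)
      rw [eq_div_iff hne]
      linarith
    have hΨΘ : Ψ (Θ (x, w)) = ι w := by
      show ((Gf (x, w) + μh (x, w) • Gg (x, w), F (x, w)), w) = ι w
      have hfirst : Gf (x, w) + μh (x, w) • Gg (x, w) = 0 := by
        rw [← hμval]; exact hstat
      rw [hfirst, hFpx]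
    have hΘq : Θ (x, w) = q := φ.injOn hΘsrc hqsrc (by rw [hφcoe, hΨΘ, ← hΨq])
    exact congrArg (fun z : ((En n × ℝ) × En d) => z.1.1) hΘq
  · rintro rfl
    have hsq : s w = q.1.1 := rfl
    have hFsw : F (s w, w) = 0 := by rw [hsq, ← hq3]; exact hq2
    refine ⟨⟨le_of_eq hFsw, q.1.2, hpos.le, ?_, by rw [hFsw, mul_zero]⟩, hsU⟩
    have hgoal : gradx f₀ q.1.1 q.2 + q.1.2 • gradx F q.1.1 q.2 = 0 := hq1
    rw [hsq, ← hq3]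
    exact hgoal
end
end

section
/- Let f₀,F : ℝⁿ×ℝ^d → ℝ be C² functions and let (x̄,w̄) satisfy F(x̄,w̄) = 0, ∇ₓF(x̄,w̄) ≠ 0, and suppose λ > 0 satisfies ∇ₓf₀(x̄,w̄)+λ∇ₓF(x̄,w̄) = 0. Then the generalized equation 0 ∈ g(x,α,w̄) + N_K(x,α) is strongly regular at (x̄,λ) if and only if the (n+1)×(n+1) matrix with block form [[∇²ₓₓL(x̄,λ,w̄), ∇ₓF(x̄,w̄)],[∇ₓF(x̄,w̄)ᵀ, 0]] is nonsingular, where L(x,α,w)=f₀(x,w)+αF(x,w) and ∇²ₓₓL(x̄,λ,w̄)=∇²ₓₓf₀(x̄,w̄)+λ∇²ₓₓF(x̄,w̄). -/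
open RealInnerProductSpace

noncomputable section

/-- The Lagrangian `L(x,α,w) = f₀(x,w) + α F(x,w)`. -/
def Lag {n d : ℕ} (f₀ F : En n × En d → ℝ) (x : En n) (α : ℝ) (w : En d) : ℝ :=
  f₀ (x, w) + α * F (x, w)

/-- The map `g(x,α,w) = (∇ₓL(x,α,w), −F(x,w)) ∈ ℝⁿ × ℝ`, as a function of
`z = (x,α)`. -/
def gmap {n d : ℕ} (f₀ F : En n × En d → ℝ) (z : En n × ℝ) (w : En d) : En n × ℝ :=
  (gradient (fun y => Lag f₀ F y z.2 w) z.1, - F (z.1, w))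

/-- The normal cone `N_K(z)` of the convex set `K = ℝⁿ × ℝ₊` at `z`
(`N_K(z) = ∅` for `z ∉ K`). -/
def NK {n : ℕ} (z : En n × ℝ) : Set (En n × ℝ) :=
  {v | 0 ≤ z.2 ∧ ∀ y : En n × ℝ, 0 ≤ y.2 → ⟪v.1, y.1 - z.1⟫ + v.2 * (y.2 - z.2) ≤ 0}

/-- The generalized equation `0 ∈ g(x,α,w0) + N_K(x,α)` is strongly regular at a
solution `zbar = (x̄,λ)`: there are `ℓ₀ > 0` and neighborhoods `U` of `0`, `V` of
`zbar` such that for each `q ∈ U` the linearized inclusion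
`q ∈ g(zbar) + ∇g(zbar)(z − zbar) + N_K(z)` has a unique solution `z = s₀(q)` in `V`,
and `s₀ : U → V` is Lipschitz with modulus `ℓ₀`. -/
def StrongRegular {n d : ℕ} (f₀ F : En n × En d → ℝ) (w0 : En d)
    (zbar : En n × ℝ) : Prop :=
  ∃ ℓ₀ : NNReal, 0 < ℓ₀ ∧ ∃ U ∈ nhds (0 : En n × ℝ), ∃ V ∈ nhds zbar,
    ∃ s₀ : En n × ℝ → En n × ℝ, LipschitzOnWith ℓ₀ s₀ U ∧
      ∀ q ∈ U, s₀ q ∈ V ∧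
        q - gmap f₀ F zbar w0
          - (fderiv ℝ (fun z => gmap f₀ F z w0) zbar) (s₀ q - zbar) ∈ NK (s₀ q) ∧
        ∀ z ∈ V,
          q - gmap f₀ F zbar w0
            - (fderiv ℝ (fun z' => gmap f₀ F z' w0) zbar) (z - zbar) ∈ NK z →
          z = s₀ q

/-- The `(n+1)×(n+1)` block matrix `[[M, u], [uᵀ, 0]]`. -/
def blockMat {n : ℕ} (M : Matrix (Fin n) (Fin n) ℝ) (u : Fin n → ℝ) :
    Matrix (Fin n ⊕ Unit) (Fin n ⊕ Unit) ℝ :=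
  Matrix.fromBlocks M (Matrix.of fun i (_ : Unit) => u i)
    (Matrix.of fun (_ : Unit) j => u j) 0

/-- The matrix of the Hessian in `x` of `x ↦ L(x,α,w0)` at `x0` (for `(QP)`-type data
this is `∇²ₓₓf₀(x0,w0) + α∇²ₓₓF(x0,w0)`). -/
def hessLagMat {n d : ℕ} (f₀ F : En n × En d → ℝ) (x0 : En n) (α : ℝ) (w0 : En d) :
    Matrix (Fin n) (Fin n) ℝ :=
  Matrix.of fun i j =>
    (fderiv ℝ (fun y => gradient (fun y' => Lag f₀ F y' α w0) y) x0)
      (EuclideanSpace.single j (1 : ℝ)) i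


namespace Stmt12Aux
open RealInnerProductSpace InnerProductSpace ContinuousLinearMap Matrix

/-! ### Riesz representation as a continuous linear map on Euclidean space -/

def rz (n : ℕ) : (En n →L[ℝ] ℝ) →L[ℝ] En n :=
  ∑ i : Fin n, (ContinuousLinearMap.apply ℝ ℝ (EuclideanSpace.single i 1)).smulRight
    (EuclideanSpace.single i (1:ℝ))

lemma euclid_coord {n : ℕ} (x : En n) (j : Fin n) :
    x j = ⟪x, EuclideanSpace.single j (1:ℝ)⟫ := by
  rw [EuclideanSpace.inner_single_right]; simp

lemma sum_coord {n : ℕ} {ι : Type*} (s : Finset ι) (f : ι → En n) (j : Fin n) :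
    (∑ i ∈ s, f i) j = ∑ i ∈ s, f i j := by
  change EuclideanSpace.proj j (∑ i ∈ s, f i) = _
  rw [map_sum]; rfl

lemma rz_apply {n : ℕ} (φ : En n →L[ℝ] ℝ) :
    rz n φ = (toDual ℝ (En n)).symm φ := by
  ext j
  have h1 : ((toDual ℝ (En n)).symm φ) j = φ (EuclideanSpace.single j (1:ℝ)) := by
    rw [euclid_coord ((toDual ℝ (En n)).symm φ) j]; exact toDual_symm_apply
  rw [h1, rz]
  rw [ContinuousLinearMap.sum_apply, sum_coord]
  simp [EuclideanSpace.single_apply]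

lemma euclid_decomp {n : ℕ} (x : En n) :
    x = ∑ j : Fin n, x j • EuclideanSpace.single j (1:ℝ) := by
  ext k
  rw [sum_coord]
  simp [EuclideanSpace.single_apply]

/-! ### Partial gradients -/

variable {n d : ℕ}

def pf (f : En n × En d → ℝ) (w0 : En d) : En n → ℝ := fun y => f (y, w0)

def G (f : En n × En d → ℝ) (w0 : En d) : En n → En n := fun x => gradient (pf f w0) x

lemma pf_contDiff (w0 : En d) {f : En n × En d → ℝ} (hf : ContDiff ℝ 2 f) :
    ContDiff ℝ 2 (pf f w0) :=
  hf.comp (contDiff_id.prodMk contDiff_const)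

lemma G_eq_rz (f : En n × En d → ℝ) (w0 : En d) :
    G f w0 = fun x => rz n (fderiv ℝ (pf f w0) x) := by
  funext x; rw [rz_apply]; rfl

lemma G_contDiff (w0 : En d) {f : En n × En d → ℝ} (hf : ContDiff ℝ 2 f) :
    ContDiff ℝ 1 (G f w0) := by
  rw [G_eq_rz]
  exact (rz n).contDiff.comp ((pf_contDiff w0 hf).fderiv_right (by norm_num))

lemma gradLag (f₀ F : En n × En d → ℝ) (w0 : En d) (x : En n) (α : ℝ)
    (hf₀ : ContDiff ℝ 2 f₀) (hF : ContDiff ℝ 2 F) :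
    gradient (fun y => Lag f₀ F y α w0) x = G f₀ w0 x + α • G F w0 x := by
  have hd₀ : DifferentiableAt ℝ (pf f₀ w0) x :=
    ((pf_contDiff w0 hf₀).differentiable (by norm_num)).differentiableAt
  have hdF : DifferentiableAt ℝ (pf F w0) x :=
    ((pf_contDiff w0 hF).differentiable (by norm_num)).differentiableAt
  have h1 : (fun y => Lag f₀ F y α w0) = fun y => pf f₀ w0 y + α * pf F w0 y := rfl
  have h2 : fderiv ℝ (fun y => pf f₀ w0 y + α * pf F w0 y) x
      = fderiv ℝ (pf f₀ w0) x + α • fderiv ℝ (pf F w0) x := by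
    rw [fderiv_fun_add hd₀ (hdF.const_mul α), fderiv_const_mul hdF]
  unfold gradient
  rw [h1, h2, map_add, LinearIsometryEquiv.map_smulₛₗ]
  simp [G, gradient, pf]

/-! ### The derivative of `gmap` -/

def Hm (f₀ F : En n × En d → ℝ) (w0 : En d) (x0 : En n) (lam : ℝ) : En n →L[ℝ] En n :=
  fderiv ℝ (fun y => G f₀ w0 y + lam • G F w0 y) x0

def uv (F : En n × En d → ℝ) (w0 : En d) (x0 : En n) : En n := G F w0 x0

def AmGen (T : En n →L[ℝ] En n) (u : En n) : (En n × ℝ) →L[ℝ] (En n × ℝ) :=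
  (T.comp (fst ℝ (En n) ℝ) + (snd ℝ (En n) ℝ).smulRight u).prod
    (-((innerSL ℝ u).comp (fst ℝ (En n) ℝ)))

lemma AmGen_apply (T : En n →L[ℝ] En n) (u : En n) (v : En n × ℝ) :
    AmGen T u v = (T v.1 + v.2 • u, -⟪u, v.1⟫) := by simp [AmGen]

lemma gmap_eq (f₀ F : En n × En d → ℝ) (w0 : En d)
    (hf₀ : ContDiff ℝ 2 f₀) (hF : ContDiff ℝ 2 F) : (fun z => gmap f₀ F z w0)
      = fun z : En n × ℝ => (G f₀ w0 z.1 + z.2 • G F w0 z.1, - pf F w0 z.1) := by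
  funext z
  exact Prod.ext (gradLag f₀ F w0 z.1 z.2 hf₀ hF) rfl

lemma fderiv_pfF (F : En n × En d → ℝ) (w0 : En d) (x0 : En n) :
    fderiv ℝ (pf F w0) x0 = innerSL ℝ (uv F w0 x0) := by
  ext v
  rw [innerSL_apply_apply]
  exact toDual_symm_apply.symm

lemma hasFDerivAt_gmap (f₀ F : En n × En d → ℝ) (w0 : En d) (x0 : En n) (lam : ℝ)
    (hf₀ : ContDiff ℝ 2 f₀) (hF : ContDiff ℝ 2 F) :
    HasFDerivAt (fun z => gmap f₀ F z w0)
      (AmGen (Hm f₀ F w0 x0 lam) (uv F w0 x0)) (x0, lam) := by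
  rw [gmap_eq f₀ F w0 hf₀ hF]
  have hG₀ : DifferentiableAt ℝ (G f₀ w0) x0 :=
    ((G_contDiff w0 hf₀).differentiable (by norm_num)).differentiableAt
  have hG₁ : DifferentiableAt ℝ (G F w0) x0 :=
    ((G_contDiff w0 hF).differentiable (by norm_num)).differentiableAt
  have h1 : HasFDerivAt (fun z : En n × ℝ => G f₀ w0 z.1)
      ((fderiv ℝ (G f₀ w0) x0).comp (fst ℝ (En n) ℝ)) (x0, lam) :=
    hG₀.hasFDerivAt.comp (x0, lam) (hasFDerivAt_fst)
  have h2 : HasFDerivAt (fun z : En n × ℝ => G F w0 z.1)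
      ((fderiv ℝ (G F w0) x0).comp (fst ℝ (En n) ℝ)) (x0, lam) :=
    hG₁.hasFDerivAt.comp (x0, lam) (hasFDerivAt_fst)
  have h3 : HasFDerivAt (fun z : En n × ℝ => z.2 • G F w0 z.1)
      (lam • ((fderiv ℝ (G F w0) x0).comp (fst ℝ (En n) ℝ))
        + (snd ℝ (En n) ℝ).smulRight (G F w0 x0)) (x0, lam) :=
    (hasFDerivAt_snd).smul h2
  have h4 := h1.add h3
  have h5 : HasFDerivAt (fun z : En n × ℝ => - pf F w0 z.1)
      (-((innerSL ℝ (uv F w0 x0)).comp (fst ℝ (En n) ℝ))) (x0, lam) := by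
    have hd := (((pf_contDiff w0 hF).differentiable (by norm_num)).differentiableAt
      (x := x0)).hasFDerivAt
    rw [fderiv_pfF F w0 x0] at hd
    exact (hd.comp (x0, lam) (hasFDerivAt_fst (𝕜 := ℝ) (p := (x0, lam)))).neg
  have hH : Hm f₀ F w0 x0 lam = fderiv ℝ (G f₀ w0) x0 + lam • fderiv ℝ (G F w0) x0 := by
    rw [Hm, fderiv_fun_add (g := fun y => lam • G F w0 y) hG₀ (hG₁.const_smul lam), fderiv_fun_const_smul hG₁]
  have heq : (fderiv ℝ (G f₀ w0) x0).comp (fst ℝ (En n) ℝ)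
      + (lam • ((fderiv ℝ (G F w0) x0).comp (fst ℝ (En n) ℝ))
        + (snd ℝ (En n) ℝ).smulRight (G F w0 x0))
      = (Hm f₀ F w0 x0 lam).comp (fst ℝ (En n) ℝ)
        + (snd ℝ (En n) ℝ).smulRight (uv F w0 x0) := by
    rw [hH]; ext v <;> simp [uv]
  exact (heq ▸ h4).prodMk h5

/-! ### The normal cone -/

lemma NK_zero_mem {z : En n × ℝ} (hz : 0 ≤ z.2) : (0 : En n × ℝ) ∈ NK z := by
  refine ⟨hz, fun y hy => ?_⟩
  simp

lemma NK_eq_zero {z v : En n × ℝ} (hz : 0 < z.2) (hv : v ∈ NK z) : v = 0 := by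
  obtain ⟨-, h⟩ := hv
  have h1 := h (z.1 + v.1, z.2) (by simpa using hz.le)
  simp only [add_sub_cancel_left, sub_self, mul_zero, add_zero] at h1
  have hv1 : v.1 = 0 := by
    have h0 := real_inner_self_nonneg (x := v.1)
    have : ⟪v.1, v.1⟫ = 0 := le_antisymm h1 h0
    exact inner_self_eq_zero.mp this
  have h2 := h (z.1, 2 * z.2) (by positivity)
  have h3 := h (z.1, 0) le_rfl
  simp only [hv1, sub_self, inner_zero_left, zero_add] at h2 h3
  have hv2 : v.2 = 0 := by nlinarith
  exact Prod.ext hv1 hv2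

/-! ### The block matrix and injectivity -/

def cvec (v : En n × ℝ) : Fin n ⊕ Unit → ℝ :=
  Sum.elim (fun i => v.1 i) (fun _ => v.2)

lemma cvec_eq_zero {v : En n × ℝ} (h : cvec v = 0) : v = 0 := by
  have h1 : v.1 = 0 := by ext i; simpa [cvec] using congrFun h (Sum.inl i)
  have h2 : v.2 = 0 := congrFun h (Sum.inr ())
  exact Prod.ext h1 h2

lemma cvec_zero : cvec (0 : En n × ℝ) = 0 := by
  funext k; cases k <;> rfl

lemma mulVec_cvec (T : En n →L[ℝ] En n) (u : En n) (v : En n × ℝ) :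
    blockMat (Matrix.of fun i j => T (EuclideanSpace.single j (1:ℝ)) i) (fun i => u i) *ᵥ cvec v
      = cvec (T v.1 + v.2 • u, ⟪u, v.1⟫) := by
  funext k
  have hT : T v.1 = ∑ j : Fin n, v.1 j • T (EuclideanSpace.single j (1:ℝ)) := by
    conv_lhs => rw [euclid_decomp v.1]
    rw [map_sum]
    simp
  rw [cvec, blockMat, Matrix.fromBlocks_mulVec]
  cases k with
  | inl i =>
    simp only [Sum.elim_inl, Pi.add_apply, Matrix.mulVec, dotProduct, Matrix.of_apply,
      cvec, Finset.univ_unique, Finset.sum_singleton]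
    rw [hT]
    have hsc := sum_coord (Finset.univ) (fun j => v.1 j • T (EuclideanSpace.single j (1:ℝ))) i
    change _ = (_ + v.2 • u) i
    rw [PiLp.add_apply, hsc, PiLp.smul_apply]
    simp [PiLp.smul_apply, mul_comm, smul_eq_mul]
  | inr _ =>
    simp only [Sum.elim_inr, Pi.add_apply, Matrix.mulVec, dotProduct, Matrix.of_apply,
      cvec]
    rw [PiLp.inner_apply]
    simp [mul_comm]

lemma AmGen_zero_iff (T : En n →L[ℝ] En n) (u : En n) (v : En n × ℝ) :
    AmGen T u v = 0 ↔ (T v.1 + v.2 • u = 0 ∧ ⟪u, v.1⟫ = 0) := by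
  rw [AmGen_apply, Prod.ext_iff]
  simp [neg_eq_zero]

lemma det_iff (T : En n →L[ℝ] En n) (u : En n) :
    (blockMat (Matrix.of fun i j => T (EuclideanSpace.single j (1:ℝ)) i)
      (fun i => u i)).det ≠ 0 ↔ Function.Injective ⇑(AmGen T u) := by
  rw [Ne, ← Matrix.exists_mulVec_eq_zero_iff]
  constructor
  · intro h
    refine (injective_iff_map_eq_zero _).mpr fun v hv => ?_
    by_contra hv0
    obtain ⟨h1, h2⟩ := (AmGen_zero_iff T u v).mp hv
    exact h ⟨cvec v, fun hc => hv0 (cvec_eq_zero hc), by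
      rw [mulVec_cvec, h1, h2]; exact cvec_zero⟩
  · rintro hinj ⟨w, hw0, hw⟩
    set v : En n × ℝ := (WithLp.toLp 2 ((fun i => w (Sum.inl i)) : Fin n → ℝ), w (Sum.inr ())) with hv
    have hcv : cvec v = w := by
      funext k
      cases k with
      | inl i => rfl
      | inr uu => cases uu; rfl
    rw [← hcv, mulVec_cvec] at hw
    have hz : v = 0 := by
      apply (injective_iff_map_eq_zero _).mp hinj
      rw [AmGen_zero_iff]
      constructor
      · ext k
        simpa [cvec] using congrFun hw (Sum.inl k)
      · simpa [cvec] using congrFun hw (Sum.inr ())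
    exact hw0 (by rw [← hcv, hz, cvec_zero])

end Stmt12Aux


/-- For `F(x0,w0) = 0`, `∇ₓF(x0,w0) ≠ 0` and a positive Lagrange
multiplier `λ`, the generalized equation `0 ∈ g(x,α,w0) + N_K(x,α)` is strongly
regular at `(x0,λ)` iff the matrix `[[∇²ₓₓL(x0,λ,w0), ∇ₓF(x0,w0)], [∇ₓF(x0,w0)ᵀ, 0]]`
is nonsingular. -/
theorem stmt12 {n d : ℕ} (f₀ F : En n × En d → ℝ)
    (hf₀ : ContDiff ℝ 2 f₀) (hF : ContDiff ℝ 2 F)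
    (x0 : En n) (w0 : En d) (lam : ℝ)
    (hFeq : F (x0, w0) = 0)
    (hgF : gradx F x0 w0 ≠ 0)
    (hlam : 0 < lam)
    (hKKT : gradx f₀ x0 w0 + lam • gradx F x0 w0 = 0) :
    StrongRegular f₀ F w0 (x0, lam) ↔
      (blockMat (hessLagMat f₀ F x0 lam w0)
        (fun i => gradx F x0 w0 i)).det ≠ 0 := by
  classical
  set T := Stmt12Aux.Hm f₀ F w0 x0 lam with hT
  set u := Stmt12Aux.uv F w0 x0 with hu
  set A := Stmt12Aux.AmGen T u with hA
  have hgx : gradx F x0 w0 = u := rfl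
  have hmat : hessLagMat f₀ F x0 lam w0
      = Matrix.of (fun i j => T (EuclideanSpace.single j (1:ℝ)) i) := by
    have hfun : (fun y => gradient (fun y' => Lag f₀ F y' lam w0) y)
        = fun y => Stmt12Aux.G f₀ w0 y + lam • Stmt12Aux.G F w0 y :=
      funext fun y => Stmt12Aux.gradLag f₀ F w0 y lam hf₀ hF
    unfold hessLagMat
    rw [hfun]
    rfl
  have hfd : fderiv ℝ (fun z => gmap f₀ F z w0) (x0, lam) = A :=
    (Stmt12Aux.hasFDerivAt_gmap f₀ F w0 x0 lam hf₀ hF).fderiv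
  have hg0 : gmap f₀ F (x0, lam) w0 = 0 := by
    have h1 : gradient (fun y => Lag f₀ F y lam w0) x0 = 0 := by
      rw [Stmt12Aux.gradLag f₀ F w0 x0 lam hf₀ hF]
      exact hKKT
    exact Prod.ext (by exact h1) (by simp [gmap, hFeq])
  rw [hmat, hgx, Stmt12Aux.det_iff]
  constructor
  · rintro ⟨ℓ₀, hℓ, U, hU, V, hV, s₀, hlip, hprop⟩
    refine (injective_iff_map_eq_zero _).mpr fun v hv => ?_
    obtain ⟨hs0V, hmem0, huniq⟩ := hprop 0 (mem_of_mem_nhds hU)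
    have hWn : (fun t : ℝ => ((x0, lam) + t • v)) ⁻¹' (V ∩ {z : En n × ℝ | 0 ≤ z.2})
        ∈ nhds (0 : ℝ) := by
      have hc : Continuous (fun t : ℝ => ((x0, lam) + t • v)) :=
        continuous_const.add (continuous_id.smul continuous_const)
      have hmem : V ∩ {z : En n × ℝ | 0 ≤ z.2} ∈ nhds ((x0, lam) : En n × ℝ) := by
        refine Filter.inter_mem hV ?_
        have hopen : IsOpen {z : En n × ℝ | 0 < z.2} :=
          isOpen_lt continuous_const continuous_snd
        exact Filter.mem_of_superset (hopen.mem_nhds (by exact hlam))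
          (fun z hz => le_of_lt (show (0:ℝ) < z.2 from hz))
      refine hc.continuousAt.preimage_mem_nhds ?_
      simpa using hmem
    obtain ⟨δ, hδ, hball⟩ := Metric.mem_nhds_iff.mp hWn
    have key : ∀ t : ℝ, |t| < δ → (x0, lam) + t • v = s₀ 0 := by
      intro t ht
      have htm : ((x0, lam) + t • v) ∈ V ∩ {z : En n × ℝ | 0 ≤ z.2} :=
        hball (by simpa [Real.dist_eq] using ht)
      refine huniq _ htm.1 ?_
      rw [hg0, hfd]
      have hts : (x0, lam) + t • v - (x0, lam) = t • v := add_sub_cancel_left _ _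
      rw [hts, map_smul, hv, smul_zero]
      simpa using Stmt12Aux.NK_zero_mem htm.2
    have h1 := key (δ / 2) (by rw [abs_of_pos (by linarith)]; linarith)
    have h2 := key 0 (by simpa using hδ)
    have h3 : (δ / 2) • v = (0 : ℝ) • v := add_left_cancel (h1.trans h2.symm)
    rw [zero_smul] at h3
    rcases smul_eq_zero.mp h3 with h | h
    · exact absurd h (by linarith)
    · exact h
  · intro hinj
    have hsurj : Function.Surjective ⇑A :=
      (LinearMap.injective_iff_surjective
        (f := ((A : (En n × ℝ) →L[ℝ] (En n × ℝ)) : (En n × ℝ) →ₗ[ℝ] (En n × ℝ)))).mp hinj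
    let E : (En n × ℝ) ≃L[ℝ] (En n × ℝ) :=
      (LinearEquiv.ofBijective ((A : (En n × ℝ) →L[ℝ] (En n × ℝ)) :
        (En n × ℝ) →ₗ[ℝ] (En n × ℝ)) ⟨hinj, hsurj⟩).toContinuousLinearEquiv
    have hEA : ∀ z, E z = A z := fun z => rfl
    set c : NNReal := ‖((E.symm : (En n × ℝ) ≃L[ℝ] (En n × ℝ)) :
      (En n × ℝ) →L[ℝ] (En n × ℝ))‖₊ with hc
    refine ⟨c + 1, lt_of_lt_of_le zero_lt_one le_add_self,
      (⇑E.symm) ⁻¹' Metric.ball 0 lam, ?_, {z : En n × ℝ | 0 < z.2}, ?_,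
      fun q => (x0, lam) + E.symm q, ?_, ?_⟩
    · refine E.symm.continuous.continuousAt.preimage_mem_nhds ?_
      rw [map_zero]
      exact Metric.ball_mem_nhds 0 hlam
    · exact (isOpen_lt continuous_const continuous_snd).mem_nhds hlam
    · have hL : LipschitzWith (c + 1) ⇑E.symm := by
        have := ((E.symm : (En n × ℝ) →L[ℝ] (En n × ℝ)).lipschitz).weaken
          (le_add_self.trans_eq (add_comm _ _) : c ≤ c + 1)
        simpa using this
      have hL2 : LipschitzWith (c + 1) (fun q => (x0, lam) + E.symm q) := fun q q' => by
        simp only []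
        rw [edist_add_left]
        exact hL q q'
      exact hL2.lipschitzOnWith
    · intro q hq
      have hq' : ‖E.symm q‖ < lam := by
        simpa [dist_zero_right] using hq
      have habs : |(E.symm q).2| < lam :=
        lt_of_le_of_lt (by simpa using norm_snd_le (E.symm q)) hq'
      have hpos : 0 < ((x0, lam) + E.symm q).2 := by
        have h1 : ((x0, lam) + E.symm q).2 = lam + (E.symm q).2 := rfl
        rw [h1]
        have := (abs_lt.mp habs).1
        linarith
      have hAq : A (E.symm q) = q := by
        rw [← hEA]; exact E.apply_symm_apply q
      refine ⟨hpos, ?_, ?_⟩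
      · rw [hg0, hfd, add_sub_cancel_left, hAq]
        simpa using Stmt12Aux.NK_zero_mem hpos.le
      · intro z hzV hz
        rw [hg0, hfd] at hz
        have h0 : q - 0 - A (z - (x0, lam)) = 0 := Stmt12Aux.NK_eq_zero hzV hz
        have h1 : A (z - (x0, lam)) = q := by
          have := sub_eq_zero.mp h0
          simpa using this.symm
        have h2 : z - (x0, lam) = E.symm q := hinj (h1.trans hAq.symm)
        exact sub_eq_iff_eq_add'.mp h2
end
end

section
/- Let f₀,F : ℝⁿ×ℝ^d → ℝ be C² functions and let (x̄,w̄) satisfy F(x̄,w̄) = 0 and ∇ₓf₀(x̄,w̄) = 0 (so (x̄,λ) with λ = 0 solves the generalized equation). Then the generalized equation 0 ∈ g(x,α,w̄) + N_K(x,α) is strongly regular at (x̄,0) if and only if the Hessian ∇²ₓₓf₀(x̄,w̄) is nonsingular and ⟨∇ₓF(x̄,w̄), (∇²ₓₓf₀(x̄,w̄))⁻¹∇ₓF(x̄,w̄)⟩ > 0. -/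
open Matrix RealInnerProductSpace

noncomputable section

/-- The matrix of the Hessian `∇²ₓₓf(x0,w0)` of `f` in `x` at `(x0,w0)`. -/
def hessMat {n d : ℕ} (f : En n × En d → ℝ) (x0 : En n) (w0 : En d) :
    Matrix (Fin n) (Fin n) ℝ :=
  Matrix.of fun i j =>
    (fderiv ℝ (fun y => gradx f y w0) x0) (EuclideanSpace.single j (1 : ℝ)) i

lemma toDual_gradient_En {n : ℕ} (h : En n → ℝ) (x : En n) :
    InnerProductSpace.toDual ℝ (En n) (gradient h x) = fderiv ℝ h x := by
  rw [gradient, (InnerProductSpace.toDual ℝ (En n)).apply_symm_apply]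

lemma inner_gradient' {n : ℕ} (h : En n → ℝ) (x u : En n) :
    ⟪gradient h x, u⟫ = fderiv ℝ h x u := by
  rw [← InnerProductSpace.toDual_apply_apply, toDual_gradient_En]

lemma contDiff_grad {n : ℕ} {h : En n → ℝ} (hh : ContDiff ℝ 2 h) :
    ContDiff ℝ 1 (fun x => gradient h x) := by
  have h1 : ContDiff ℝ 1 (fun x => fderiv ℝ h x) := hh.fderiv_right (by norm_num)
  exact (((InnerProductSpace.toDual ℝ (En n)).symm.toContinuousLinearEquiv
      : (En n →L[ℝ] ℝ) ≃L[ℝ] En n).toContinuousLinearMap.contDiff).comp h1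

lemma sum_single' {n : ℕ} (u : En n) :
    ∑ j, u j • (EuclideanSpace.single j (1:ℝ)) = u := by
  ext i
  have : (∑ j : Fin n, u j • EuclideanSpace.single j (1:ℝ)) i
      = ∑ j : Fin n, (u j • EuclideanSpace.single j (1:ℝ)) i :=
    by rw [WithLp.ofLp_sum]; exact Finset.sum_apply i Finset.univ _
  rw [this]
  simp [EuclideanSpace.single_apply]

lemma mem_NK_iff {n : ℕ} {v z : En n × ℝ} :
    v ∈ NK z ↔ v.1 = 0 ∧ 0 ≤ z.2 ∧ v.2 ≤ 0 ∧ v.2 * z.2 = 0 := by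
  constructor
  · rintro ⟨hz, hy⟩
    have h1 : v.1 = 0 := by
      have := hy (z.1 + v.1, z.2) hz
      simp only [add_sub_cancel_left, sub_self, mul_zero, add_zero] at this
      exact real_inner_self_nonpos.1 this
    have h2 : v.2 ≤ 0 := by
      have := hy (z.1, z.2 + 1) (by simp only; linarith)
      simp only [sub_self, inner_zero_right, add_sub_cancel_left, mul_one, zero_add] at this
      exact this
    have h3 : v.2 * z.2 = 0 := by
      have := hy (z.1, 0) le_rfl
      simp only [sub_self, inner_zero_right, zero_sub, mul_neg, zero_add, neg_nonpos] at this
      nlinarith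
    exact ⟨h1, hz, h2, h3⟩
  · rintro ⟨h1, h2, h3, h4⟩
    refine ⟨h2, fun y hy => ?_⟩
    rw [h1]
    simp only [inner_zero_left, zero_add]
    nlinarith

section Setup
variable {n d : ℕ} (f₀ F : En n × En d → ℝ)
  (hf₀ : ContDiff ℝ 2 f₀) (hF : ContDiff ℝ 2 F) (x0 : En n) (w0 : En d)

lemma gmap_eq (z : En n × ℝ) (hf₀ : ContDiff ℝ 2 f₀) (hF : ContDiff ℝ 2 F) :
    gmap f₀ F z w0
      = (gradient (fun y : En n => f₀ (y, w0)) z.1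
          + z.2 • gradient (fun y : En n => F (y, w0)) z.1, -F (z.1, w0)) := by
  have hc₀ : ContDiff ℝ 2 (fun y : En n => f₀ (y, w0)) :=
    hf₀.comp (contDiff_id.prodMk contDiff_const)
  have hcF : ContDiff ℝ 2 (fun y : En n => F (y, w0)) :=
    hF.comp (contDiff_id.prodMk contDiff_const)
  have h1 : HasFDerivAt (fun y : En n => f₀ (y, w0))
      (fderiv ℝ (fun y : En n => f₀ (y, w0)) z.1) z.1 :=
    ((hc₀.differentiable two_ne_zero) z.1).hasFDerivAt
  have h2 : HasFDerivAt (fun y : En n => F (y, w0))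
      (fderiv ℝ (fun y : En n => F (y, w0)) z.1) z.1 :=
    ((hcF.differentiable two_ne_zero) z.1).hasFDerivAt
  have h3 := h1.add (h2.const_mul z.2)
  have h4 : HasGradientAt (fun y : En n => f₀ (y, w0) + z.2 * F (y, w0))
      (gradient (fun y : En n => f₀ (y, w0)) z.1
        + z.2 • gradient (fun y : En n => F (y, w0)) z.1) z.1 := by
    rw [hasGradientAt_iff_hasFDerivAt, map_add, _root_.map_smul, toDual_gradient_En, toDual_gradient_En]
    exact h3
  unfold gmap Lag
  rw [h4.gradient]

lemma gmap_hasFDerivAt (hf₀ : ContDiff ℝ 2 f₀) (hF : ContDiff ℝ 2 F) :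
    HasFDerivAt (fun z : En n × ℝ => gmap f₀ F z w0)
      (((fderiv ℝ (fun x : En n => gradx f₀ x w0) x0).comp (ContinuousLinearMap.fst ℝ (En n) ℝ)
          + (ContinuousLinearMap.snd ℝ (En n) ℝ).smulRight (gradx F x0 w0)).prod
        (-((InnerProductSpace.toDual ℝ (En n) (gradx F x0 w0)).comp
            (ContinuousLinearMap.fst ℝ (En n) ℝ)))) (x0, 0) := by
  have hc₀ : ContDiff ℝ 2 (fun y : En n => f₀ (y, w0)) :=
    hf₀.comp (contDiff_id.prodMk contDiff_const)
  have hcF : ContDiff ℝ 2 (fun y : En n => F (y, w0)) :=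
    hF.comp (contDiff_id.prodMk contDiff_const)
  have heq : (fun z : En n × ℝ => gmap f₀ F z w0)
      = fun z : En n × ℝ => (gradx f₀ z.1 w0 + z.2 • gradx F z.1 w0, -F (z.1, w0)) :=
    funext fun z => gmap_eq f₀ F w0 z hf₀ hF
  rw [heq]
  have hΦ : HasFDerivAt (fun x : En n => gradx f₀ x w0)
      (fderiv ℝ (fun x : En n => gradx f₀ x w0) x0) x0 :=
    (((contDiff_grad hc₀).differentiable one_ne_zero) x0).hasFDerivAt
  have hΦ₂ : HasFDerivAt (fun x : En n => gradx F x w0)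
      (fderiv ℝ (fun x : En n => gradx F x w0) x0) x0 :=
    (((contDiff_grad hcF).differentiable one_ne_zero) x0).hasFDerivAt
  have hA1 : HasFDerivAt (fun z : En n × ℝ => gradx f₀ z.1 w0)
      ((fderiv ℝ (fun x : En n => gradx f₀ x w0) x0).comp
        (ContinuousLinearMap.fst ℝ (En n) ℝ)) (x0, 0) :=
    hΦ.comp (x0, 0) hasFDerivAt_fst
  have hA2 := (hasFDerivAt_snd (𝕜 := ℝ) (E := En n) (F := ℝ) (p := (x0, (0:ℝ)))).smul
    (hΦ₂.comp (x0, 0) hasFDerivAt_fst)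
  have hA2' : HasFDerivAt (fun z : En n × ℝ => z.2 • gradx F z.1 w0)
      ((ContinuousLinearMap.snd ℝ (En n) ℝ).smulRight (gradx F x0 w0)) (x0, 0) := by
    simp at hA2
    exact hA2
  have hgrFeq : gradx F x0 w0 = gradient (fun y : En n => F (y, w0)) x0 := rfl
  have hFd : HasFDerivAt (fun y : En n => F (y, w0))
      (InnerProductSpace.toDual ℝ (En n) (gradx F x0 w0)) x0 := by
    rw [hgrFeq, toDual_gradient_En]
    exact ((hcF.differentiable two_ne_zero) x0).hasFDerivAt
  have hB : HasFDerivAt (fun z : En n × ℝ => -F (z.1, w0))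
      (-((InnerProductSpace.toDual ℝ (En n) (gradx F x0 w0)).comp
        (ContinuousLinearMap.fst ℝ (En n) ℝ))) (x0, 0) :=
    by have h := hFd.comp (x0, (0:ℝ)) (hasFDerivAt_fst (𝕜 := ℝ) (E := En n) (F := ℝ) (p := (x0, (0:ℝ)))); exact h.neg
  exact HasFDerivAt.prodMk (hA1.add hA2') hB

end Setup

set_option maxHeartbeats 1000000 in
/-- For `F(x0,w0) = 0` and `∇ₓf₀(x0,w0) = 0` (so `(x0, 0)` solves the
generalized equation), the generalized equation `0 ∈ g(x,α,w0) + N_K(x,α)` is strongly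
regular at `(x0, 0)` iff the Hessian `∇²ₓₓf₀(x0,w0)` is nonsingular and
`⟨∇ₓF(x0,w0), (∇²ₓₓf₀(x0,w0))⁻¹ ∇ₓF(x0,w0)⟩ > 0`. -/
theorem stmt13 {n d : ℕ} (f₀ F : En n × En d → ℝ)
    (hf₀ : ContDiff ℝ 2 f₀) (hF : ContDiff ℝ 2 F)
    (x0 : En n) (w0 : En d)
    (hFeq : F (x0, w0) = 0)
    (hstat : gradx f₀ x0 w0 = 0) :
    StrongRegular f₀ F w0 (x0, 0) ↔
      ((hessMat f₀ x0 w0).det ≠ 0 ∧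
        0 < (fun i => gradx F x0 w0 i) ⬝ᵥ
          (hessMat f₀ x0 w0)⁻¹.mulVec (fun i => gradx F x0 w0 i)) := by
  classical
  set M := hessMat f₀ x0 w0 with hMdef
  set A : En n →L[ℝ] En n := fderiv ℝ (fun x : En n => gradx f₀ x w0) x0 with hAdef
  set b : En n := gradx F x0 w0 with hbdef
  set bv : Fin n → ℝ := fun i => gradx F x0 w0 i with hbvdef
  set T : (En n × ℝ) →L[ℝ] (En n × ℝ) :=
    (A.comp (ContinuousLinearMap.fst ℝ (En n) ℝ)
        + (ContinuousLinearMap.snd ℝ (En n) ℝ).smulRight b).prod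
      (-((InnerProductSpace.toDual ℝ (En n) b).comp
          (ContinuousLinearMap.fst ℝ (En n) ℝ))) with hTdef
  have hfderiv : fderiv ℝ (fun z : En n × ℝ => gmap f₀ F z w0) (x0, 0) = T :=
    (gmap_hasFDerivAt f₀ F x0 w0 hf₀ hF).fderiv
  have hgm0 : gmap f₀ F (x0, 0) w0 = 0 := by
    rw [gmap_eq f₀ F w0 (x0, 0) hf₀ hF]
    have : gradient (fun y : En n => f₀ (y, w0)) x0 = 0 := hstat
    rw [this, hFeq]
    simp
  have hTapp : ∀ p : En n × ℝ, T p = (A p.1 + p.2 • b, -(⟪b, p.1⟫)) := by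
    intro p
    rw [hTdef]
    simp [ContinuousLinearMap.prod_apply]
  -- matrix action of A
  have hAapp : ∀ (u : En n) (i : Fin n), A u i = M.mulVec (fun j => u j) i := by
    intro u i
    conv_lhs => rw [← sum_single' u, map_sum]
    have hs : (∑ j : Fin n, A (u j • EuclideanSpace.single j (1:ℝ))) i
        = ∑ j : Fin n, (A (u j • EuclideanSpace.single j (1:ℝ))) i :=
      by rw [WithLp.ofLp_sum]; exact Finset.sum_apply i Finset.univ _
    rw [hs]
    have : ∀ j : Fin n, (A (u j • EuclideanSpace.single j (1:ℝ))) i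
        = M i j * u j := by
      intro j
      rw [_root_.map_smul]
      have : M i j = A (EuclideanSpace.single j (1:ℝ)) i := rfl
      rw [this]
      simp [mul_comm]
    rw [Finset.sum_congr rfl fun j _ => this j]
    rfl
  have hinner : ∀ v : En n, ⟪b, v⟫ = bv ⬝ᵥ (fun i => v i) := by
    intro v
    rw [PiLp.inner_apply]
    simp [dotProduct, mul_comm]
    rfl
  -- the linearized inclusion, characterized
  have hincl : ∀ q z : En n × ℝ,
      (q - gmap f₀ F (x0, 0) w0
        - (fderiv ℝ (fun z' : En n × ℝ => gmap f₀ F z' w0) (x0, 0)) (z - (x0, 0)) ∈ NK z)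
      ↔ (q.1 = A (z.1 - x0) + z.2 • b ∧ 0 ≤ z.2 ∧ q.2 + ⟪b, z.1 - x0⟫ ≤ 0
          ∧ (q.2 + ⟪b, z.1 - x0⟫) * z.2 = 0) := by
    intro q z
    rw [hfderiv, hgm0, mem_NK_iff, hTapp]
    have e1 : (z - (x0, (0:ℝ))).1 = z.1 - x0 := rfl
    have e2 : (z - (x0, (0:ℝ))).2 = z.2 := by simp
    rw [e1, e2]
    constructor
    · rintro ⟨h1, h2, h3, h4⟩
      refine ⟨?_, h2, ?_, ?_⟩
      · have := h1
        simp only [Prod.fst_sub] at this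
        rw [sub_eq_zero] at this
        simpa using this
      · simpa using h3
      · simpa using h4
    · rintro ⟨h1, h2, h3, h4⟩
      refine ⟨?_, h2, ?_, ?_⟩
      · simp only [Prod.fst_sub]
        rw [sub_eq_zero]
        simpa using h1
      · simpa using h3
      · simpa using h4
  constructor
  · rintro ⟨ℓ, hℓ, U, hU, V, hV, s₀, hlip, hsol⟩
    have hdet : M.det ≠ 0 := by
      intro hdet0
      obtain ⟨v, hv0, hvM⟩ := (Matrix.exists_mulVec_eq_zero_iff).2 hdet0
      set u : En n := (WithLp.equiv 2 (Fin n → ℝ)).symm v with hudef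
      have huA : A u = 0 := by
        ext i
        rw [hAapp]
        have hvv : (fun j => u j) = v := rfl
        rw [hvv, hvM]
        rfl
      have hu0 : u ≠ 0 := by
        intro h
        exact hv0 (congrArg (WithLp.equiv 2 (Fin n → ℝ)) h)
      set u' : En n := if ⟪b, u⟫ ≤ 0 then u else -u with hu'def
      have hbu' : ⟪b, u'⟫ ≤ 0 := by
        rw [hu'def]
        split_ifs with h
        · exact h
        · rw [inner_neg_right]
          linarith [not_le.1 h]
      have hu'A : A u' = 0 := by
        rw [hu'def]; split_ifs
        · exact huA
        · rw [map_neg, huA, neg_zero]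
      have hu'0 : u' ≠ 0 := by
        rw [hu'def]; split_ifs
        · exact hu0
        · exact neg_ne_zero.2 hu0
      have h0U : (0 : En n × ℝ) ∈ U := mem_of_mem_nhds hU
      obtain ⟨hs₀V, hs₀incl, huniq⟩ := hsol 0 h0U
      have hzbar : (x0, (0:ℝ)) = s₀ 0 := by
        refine huniq (x0, 0) (mem_of_mem_nhds hV) ?_
        rw [hincl]
        refine ⟨by simp, le_rfl, by simp, by simp⟩
      obtain ⟨ε, hε, hball⟩ := Metric.mem_nhds_iff.1 hV
      set t : ℝ := ε / (2 * (‖u'‖ + 1)) with htdef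
      have ht0 : 0 < t := by positivity
      have hnlt : ‖t • u'‖ < ε := by
        rw [norm_smul, Real.norm_eq_abs, abs_of_pos ht0]
        have h1 : t * ‖u'‖ ≤ t * (‖u'‖ + 1) := by nlinarith [norm_nonneg u']
        have h2 : t * (‖u'‖ + 1) = ε / 2 := by
          rw [htdef]
          field_simp
        linarith
      have hztV : (x0 + t • u', (0:ℝ)) ∈ V := by
        apply hball
        rw [Metric.mem_ball, Prod.dist_eq]
        have h1 : dist (x0 + t • u') x0 = ‖t • u'‖ := by
          rw [dist_eq_norm]
          congr 1
          abel
        rw [h1]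
        simp only [dist_self]
        rw [max_eq_left (norm_nonneg _)]
        exact hnlt
      have hzt : (x0 + t • u', (0:ℝ)) = s₀ 0 := by
        refine huniq _ hztV ?_
        rw [hincl]
        have hsub : (x0 + t • u' : En n) - x0 = t • u' := by abel
        refine ⟨?_, le_rfl, ?_, ?_⟩
        · simp only [hsub, Prod.fst_zero, Prod.snd_zero, zero_smul, add_zero,
            _root_.map_smul, hu'A, smul_zero]
        · simp only [hsub, Prod.snd_zero, real_inner_smul_right, zero_add]
          exact mul_nonpos_of_nonneg_of_nonpos ht0.le hbu'
        · simp
      have hcontr : t • u' = 0 := by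
        have h := hzt.trans hzbar.symm
        have h1 := congrArg Prod.fst h
        simpa using h1
      rcases smul_eq_zero.1 hcontr with h | h
      · exact ht0.ne' h
      · exact hu'0 h
    refine ⟨hdet, ?_⟩
    by_contra hc
    push_neg at hc
    obtain ⟨ε, hε, hballU⟩ := Metric.mem_nhds_iff.1 hU
    set q : En n × ℝ := (0, ε/2) with hqdef
    have hqU : q ∈ U := by
      apply hballU
      rw [Metric.mem_ball, Prod.dist_eq]
      have h1 : dist (q.1) (0 : En n × ℝ).1 = 0 := by simp [hqdef]
      have h2 : dist (q.2) (0 : En n × ℝ).2 = ε/2 := by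
        simp [hqdef, Real.dist_eq, abs_of_pos, hε]
      rw [h1, h2]
      rw [max_eq_right (by linarith)]
      linarith
    obtain ⟨hs₀V, hs₀incl, -⟩ := hsol q hqU
    rw [hincl] at hs₀incl
    obtain ⟨h1, h2, h3, -⟩ := hs₀incl
    have hq1 : q.1 = (0 : En n) := rfl
    have hq2 : q.2 = ε/2 := rfl
    rw [hq1] at h1
    -- A (z.1 - x0) = -(z.2 • b)
    have hAz : A ((s₀ q).1 - x0) = -((s₀ q).2 • b) := by
      have := h1.symm
      linear_combination (norm := module) this
    have hwv : (fun j => ((s₀ q).1 - x0) j) = M⁻¹.mulVec ((-(s₀ q).2) • bv) := by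
      have hMw : M.mulVec (fun j => ((s₀ q).1 - x0) j) = (-(s₀ q).2) • bv := by
        funext i
        rw [← hAapp]
        rw [hAz]
        have : (-((s₀ q).2 • b)) i = -((s₀ q).2 * b i) := rfl
        rw [this]
        simp [hbvdef, hbdef]
      rw [← hMw, Matrix.mulVec_mulVec, Matrix.nonsing_inv_mul M (isUnit_iff_ne_zero.2 hdet),
        Matrix.one_mulVec]
    have hiz : ⟪b, (s₀ q).1 - x0⟫ = -(s₀ q).2 * (bv ⬝ᵥ M⁻¹.mulVec bv) := by
      rw [hinner, hwv, Matrix.mulVec_smul, dotProduct_smul]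
      simp [smul_eq_mul]
    rw [hq2, hiz] at h3
    nlinarith
  · rintro ⟨hdet, hcval⟩
    set cval : ℝ := bv ⬝ᵥ M⁻¹.mulVec bv with hcvaldef
    have hcpos : 0 < cval := hcval
    have hMunit : IsUnit M.det := isUnit_iff_ne_zero.2 hdet
    set Binv : En n →L[ℝ] En n :=
      LinearMap.toContinuousLinearMap (Matrix.toEuclideanLin M⁻¹) with hBdef
    have hBapp : ∀ (v : En n) (i : Fin n), Binv v i = M⁻¹.mulVec (fun j => v j) i :=
      fun v i => rfl
    have hwveq : ∀ v : En n, (fun j => Binv v j) = M⁻¹.mulVec (fun j => v j) :=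
      fun v => funext (hBapp v)
    have hABinv : ∀ v : En n, A (Binv v) = v := by
      intro v; ext i
      rw [hAapp, hwveq, Matrix.mulVec_mulVec, Matrix.mul_nonsing_inv M hMunit,
        Matrix.one_mulVec]
    have hBinvA : ∀ v : En n, Binv (A v) = v := by
      intro v; ext i
      rw [hBapp]
      have hAv : (fun j => A v j) = M.mulVec (fun j => v j) := funext (hAapp v)
      rw [hAv, Matrix.mulVec_mulVec, Matrix.nonsing_inv_mul M hMunit, Matrix.one_mulVec]
    have hcb : ⟪b, Binv b⟫ = cval := by
      rw [hinner, hwveq]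
    set Lq : (En n × ℝ) →L[ℝ] ℝ :=
      ((InnerProductSpace.toDual ℝ (En n) b).comp
        (Binv.comp (ContinuousLinearMap.fst ℝ (En n) ℝ)))
        + ContinuousLinearMap.snd ℝ (En n) ℝ with hLdef
    have hLapp : ∀ q : En n × ℝ, Lq q = ⟪b, Binv q.1⟫ + q.2 := by
      intro q
      rw [hLdef]
      simp
    set ψ : En n × ℝ → ℝ := fun q => max (Lq q) 0 with hψdef
    set wv : En n × ℝ := cval⁻¹ • (-(Binv b), 1) with hwdef
    set C : (En n × ℝ) →L[ℝ] (En n × ℝ) :=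
      (Binv.comp (ContinuousLinearMap.fst ℝ (En n) ℝ)).prod 0 with hCdef
    set s : En n × ℝ → En n × ℝ := fun q => ((x0, (0:ℝ)) + C q) + ψ q • wv with hsdef
    have hψlip : LipschitzWith ‖Lq‖₊ ψ := Lq.lipschitz.max_const 0
    have hsm : LipschitzWith (‖(1 : ℝ →L[ℝ] ℝ).smulRight wv‖₊ * ‖Lq‖₊)
        (fun q : En n × ℝ => ψ q • wv) := by
      have h2 : LipschitzWith ‖(1 : ℝ →L[ℝ] ℝ).smulRight wv‖₊ (fun t : ℝ => t • wv) := by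
        have := ((1 : ℝ →L[ℝ] ℝ).smulRight wv).lipschitz
        exact this
      exact h2.comp hψlip
    have hC : LipschitzWith (0 + ‖C‖₊) (fun q : En n × ℝ => (x0, (0:ℝ)) + C q) :=
      (LipschitzWith.const _).add C.lipschitz
    have hslip : LipschitzWith ((0 + ‖C‖₊) + ‖(1 : ℝ →L[ℝ] ℝ).smulRight wv‖₊ * ‖Lq‖₊) s :=
      hC.add hsm
    have hs1 : ∀ q : En n × ℝ, (s q).1 = x0 + Binv q.1 - (ψ q * cval⁻¹) • Binv b := by
      intro q
      rw [hsdef]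
      show ((x0, (0:ℝ)) + C q).1 + (ψ q • wv).1 = _
      rw [hwdef, hCdef]
      show x0 + Binv q.1 + ψ q • (cval⁻¹ • -(Binv b)) = _
      rw [smul_smul]
      module
    have hs2 : ∀ q : En n × ℝ, (s q).2 = ψ q * cval⁻¹ := by
      intro q
      rw [hsdef]
      show ((0:ℝ) + (C q).2) + ψ q * (wv).2 = _
      rw [hwdef, hCdef]
      show (0:ℝ) + 0 + ψ q * (cval⁻¹ * 1) = _
      ring
    refine ⟨(0 + ‖C‖₊) + ‖(1 : ℝ →L[ℝ] ℝ).smulRight wv‖₊ * ‖Lq‖₊ + 1,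
      zero_lt_one.trans_le le_add_self, Set.univ, Filter.univ_mem, Set.univ,
      Filter.univ_mem, s, lipschitzOnWith_univ.2 (hslip.weaken le_self_add), ?_⟩
    intro q _
    refine ⟨Set.mem_univ _, ?_, ?_⟩
    · rw [hincl]
      have hsub : (s q).1 - x0 = Binv q.1 - (ψ q * cval⁻¹) • Binv b := by
        rw [hs1]; abel
      have hslackeq : q.2 + ⟪b, (s q).1 - x0⟫ = Lq q - ψ q := by
        rw [hsub, inner_sub_right, real_inner_smul_right, hcb, hLapp]
        field_simp
        ring
      refine ⟨?_, ?_, ?_, ?_⟩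
      · rw [hsub, hs2, map_sub, _root_.map_smul, hABinv, hABinv]
        module
      · rw [hs2]
        exact mul_nonneg (le_max_right _ _) (inv_nonneg.2 hcpos.le)
      · rw [hslackeq]
        have := le_max_left (Lq q) 0
        simp only [hψdef]
        linarith
      · rw [hslackeq, hs2]
        rcases le_or_gt (Lq q) 0 with h | h
        · have hψ0 : ψ q = 0 := by rw [hψdef]; exact max_eq_right h
          rw [hψ0]
          ring
        · have hψ0 : ψ q = Lq q := by rw [hψdef]; exact max_eq_left h.le
          rw [hψ0]
          ring
    · intro z _ hz
      rw [hincl] at hz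
      obtain ⟨h1, h2, h3, h4⟩ := hz
      have hz1 : z.1 - x0 = Binv q.1 - z.2 • Binv b := by
        have hb1 := congrArg Binv h1
        rw [map_add, _root_.map_smul, hBinvA] at hb1
        linear_combination (norm := module) -hb1
      have hslack : q.2 + ⟪b, z.1 - x0⟫ = Lq q - z.2 * cval := by
        rw [hz1, inner_sub_right, real_inner_smul_right, hcb, hLapp]
        ring
      rw [hslack] at h3 h4
      have hβ : z.2 = ψ q * cval⁻¹ := by
        rcases eq_or_lt_of_le h2 with h0 | h0
        · have hL0 : Lq q ≤ 0 := by
            rw [← h0] at h3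
            linarith
          have : ψ q = 0 := by rw [hψdef]; exact max_eq_right hL0
          rw [this, ← h0]
          ring
        · have hz0 : Lq q - z.2 * cval = 0 := by
            rcases mul_eq_zero.1 h4 with h | h
            · exact h
            · exact absurd h h0.ne'
          have hLqv : Lq q = z.2 * cval := by linarith
          have hψL : ψ q = Lq q := by
            rw [hψdef]
            exact max_eq_left (by nlinarith)
          rw [hψL, hLqv]
          field_simp
      refine Prod.ext ?_ ?_
      · rw [hs1, ← hβ]
        have : z.1 = x0 + (z.1 - x0) := by abel
        rw [this, hz1]
        module
      · rw [hs2, hβ]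
end
end

section
/- Let M be an invertible real n×n matrix and b ∈ ℝⁿ. Assume: (5a) the only pair (v,γ) ∈ ℝⁿ×ℝ with Mv + γb = 0 and bᵀv = 0 is (0,0); and (5b) there is no pair (v,γ) ∈ ℝⁿ×ℝ with Mv + γb = 0, bᵀv > 0 and γ ≥ 0. Then bᵀM⁻¹b > 0. -/
open Matrix

/-- Let `M` be an invertible real `n×n` matrix and `b ∈ ℝⁿ`. If
(5a) the only `(v,γ)` with `Mv + γb = 0` and `bᵀv = 0` is `(0,0)`, and (5b) there is
no `(v,γ)` with `Mv + γb = 0`, `bᵀv > 0` and `γ ≥ 0`, then `bᵀM⁻¹b > 0`. -/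
theorem stmt19 {n : ℕ} (M : Matrix (Fin n) (Fin n) ℝ) (b : Fin n → ℝ)
    (hM : IsUnit M.det)
    (h5a : ∀ (v : Fin n → ℝ) (γ : ℝ),
      M.mulVec v + γ • b = 0 → b ⬝ᵥ v = 0 → v = 0 ∧ γ = 0)
    (h5b : ¬ ∃ (v : Fin n → ℝ) (γ : ℝ),
      M.mulVec v + γ • b = 0 ∧ 0 < b ⬝ᵥ v ∧ 0 ≤ γ) :
    0 < b ⬝ᵥ M⁻¹.mulVec b := by
  set v : Fin n → ℝ := -(M⁻¹.mulVec b) with hv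
  have hMv : M.mulVec v + (1 : ℝ) • b = 0 := by
    have : M.mulVec (M⁻¹.mulVec b) = b := by
      rw [mulVec_mulVec, mul_nonsing_inv _ hM, one_mulVec]
    simp [hv, mulVec_neg, this]
  have hle : b ⬝ᵥ v ≤ 0 := by
    by_contra h
    exact h5b ⟨v, 1, hMv, lt_of_not_ge h, zero_le_one⟩
  have hne : b ⬝ᵥ v ≠ 0 := by
    intro h
    exact one_ne_zero (h5a v 1 hMv h).2
  have : 0 < -(b ⬝ᵥ v) := by
    have := lt_of_le_of_ne hle hne
    linarith
  simpa [hv] using this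
end
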